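/- For every even k ≥ 2 and every real number c with 1 ≤ c ≤ (2ℓ_k-1)², one has ( c · ∑_{ω ∈ P_{X₋,ℓ_k}} exp( f₀(ω)·(2ℓ_k-1)² ) )^{10} ≤ c · ∑_{ω ∈ P_{X₊,ℓ_k}} exp( f₀(ω)·(2ℓ_k-1)² ); and for every odd k ≥ 3 and every real 1 ≤ c ≤ (2ℓ_k-1)², the same inequality holds with the roles of P_{X₊,ℓ_k} and P_{X₋,ℓ_k} interchanged. (This is the quantitative content of Proposition 5.1: with c = c_{ℓ_k} the number of computation-layer patterns, the two sides are the tenth power of |G_{Ỹ₋,ℓ_k}| and |G_{Ỹ₊,ℓ_k}| respectively.) -/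

import Mathlib

/-- The three-letter alphabet `Σ = {-1, 0, +1}`. -/
inductive Letter : Type
  | neg : Letter
  | zero : Letter
  | pos : Letter
deriving DecidableEq

instance instFintypeLetter : Fintype Letter :=
  ⟨{Letter.neg, Letter.zero, Letter.pos}, fun x => by cases x <;> simp⟩

/-- `f₀(ω)`: the frequency of the symbol `0` in the finite string `ω`. -/
noncomputable def f0 {n : ℕ} (ω : Fin n → Letter) : ℝ :=
  ((Finset.univ.filter fun i => ω i = Letter.zero).card : ℝ) / n

/-- The binary entropy `H(t) = -t log t - (1-t) log (1-t)` (with `0 log 0 = 0`). -/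
noncomputable def H (t : ℝ) : ℝ := -(t * Real.log t) - (1 - t) * Real.log (1 - t)

/-- `η` occurs as a consecutive substring of `ω` starting at position `s`. -/
def occursAt {p n : ℕ} (η : Fin p → Letter) (ω : Fin n → Letter) (s : ℕ) : Prop :=
  ∃ _h : s + p ≤ n, ∀ i : Fin p, η i = ω ⟨s + i.val, by have := i.isLt; omega⟩

/-- `η` occurs as a consecutive substring of `ω`. -/
def occursIn {p n : ℕ} (η : Fin p → Letter) (ω : Fin n → Letter) : Prop :=
  ∃ s, occursAt η ω s

/-- The symbol forbidden at level `k`: `-1` for odd `k`, `+1` for even `k`. -/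
def bad (k : ℕ) : Letter := if k % 2 = 1 then Letter.neg else Letter.pos

/-- The forbidden sets `F_k` of the construction of Section 4: strings of length `2ℓ_k - 1`
containing the bad symbol, or over the good alphabet with frequency of zeros `≥ r_k`,
or over the good alphabet containing a forbidden string of an earlier level of the same parity. -/
def Forb (ℓ : ℕ → ℕ) (r : ℕ → ℚ) (k : ℕ) : Set (Fin (2 * ℓ k - 1) → Letter) :=
  {ω | ∃ i, ω i = bad k} ∪
    {ω | (∀ i, ω i ≠ bad k) ∧ (r k : ℝ) ≤ f0 ω} ∪
    {ω | (∀ i, ω i ≠ bad k) ∧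
      ∃ k' : Fin k, 1 ≤ k'.val ∧ k'.val % 2 = k % 2 ∧
        ∃ η ∈ Forb ℓ r k'.val, occursIn η ω}
termination_by k
decreasing_by exact k'.isLt

open Classical in
/-- The locally admissible strings of length `2n-1`:  no string from `⋃_{k' ≡ parity, k' ≥ 1} F_{k'}`
occurs as a consecutive substring.  `parity = 1` corresponds to `X₊`, `parity = 0` to `X₋`. -/
noncomputable def Padm (ℓ : ℕ → ℕ) (r : ℕ → ℚ) (parity : ℕ) (n : ℕ) :
    Finset (Fin (2 * n - 1) → Letter) :=
  Finset.univ.filter fun ω =>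
    ∀ k, 1 ≤ k → k % 2 = parity → ∀ η ∈ Forb ℓ r k, ¬ occursIn η ω

/-- `m_k = (2ℓ_k - 1)/(2ℓ_{k-1} - 1)`. -/
def mblk (ℓ : ℕ → ℕ) (k : ℕ) : ℕ := (2 * ℓ k - 1) / (2 * ℓ (k - 1) - 1)

open Classical in
/-- Strings of length `N` which are concatenations of `m` blocks of length `L`,
the blocks at the even positions (`0`-based) taken from `B` and the blocks at odd
positions equal to the constant block `g^L`. -/
noncomputable def CfromB {L : ℕ} (N m : ℕ) (g : Letter) (B : Finset (Fin L → Letter)) :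
    Finset (Fin N → Letter) :=
  Finset.univ.filter fun ω => ∀ j < m,
    if j % 2 = 0 then ∃ η ∈ B, occursAt η ω (j * L)
    else occursAt (fun _ : Fin L => g) ω (j * L)

/-- `B₊,k = P_{X₊,ℓ_k} ∖ {(+1)^{2ℓ_k-1}}`. -/
noncomputable def Bplus (ℓ : ℕ → ℕ) (r : ℕ → ℚ) (k : ℕ) :
    Finset (Fin (2 * ℓ k - 1) → Letter) :=
  Padm ℓ r 1 (ℓ k) \ {fun _ => Letter.pos}

/-- `B₋,k = P_{X₋,ℓ_k} ∖ {(-1)^{2ℓ_k-1}}`. -/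
noncomputable def Bminus (ℓ : ℕ → ℕ) (r : ℕ → ℚ) (k : ℕ) :
    Finset (Fin (2 * ℓ k - 1) → Letter) :=
  Padm ℓ r 0 (ℓ k) \ {fun _ => Letter.neg}

/-- `C₊,k`: alternating concatenations of blocks from `B₊,k-1` and constant `+1` blocks. -/
noncomputable def Cplus (ℓ : ℕ → ℕ) (r : ℕ → ℚ) (k : ℕ) :
    Finset (Fin (2 * ℓ k - 1) → Letter) :=
  CfromB (2 * ℓ k - 1) (mblk ℓ k) Letter.pos (Bplus ℓ r (k - 1))

/-- `C₋,k`: alternating concatenations of blocks from `B₋,k-1` and constant `-1` blocks. -/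
noncomputable def Cminus (ℓ : ℕ → ℕ) (r : ℕ → ℚ) (k : ℕ) :
    Finset (Fin (2 * ℓ k - 1) → Letter) :=
  CfromB (2 * ℓ k - 1) (mblk ℓ k) Letter.neg (Bminus ℓ r (k - 1))

/-- The subshift `X_k ⊆ Σ^ℤ`: bi-infinite sequences in which no string of `F_k` occurs. -/
def Xk (ℓ : ℕ → ℕ) (r : ℕ → ℚ) (k : ℕ) : Set (ℤ → Letter) :=
  {x | ∀ η ∈ Forb ℓ r k, ∀ j : ℤ, ¬ (∀ i : Fin (2 * ℓ k - 1), η i = x (j + (i.val : ℤ)))}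

/-- `X₊ = ⋂_{m ≥ 1} X_{2m-1}`. -/
def Xplus (ℓ : ℕ → ℕ) (r : ℕ → ℚ) : Set (ℤ → Letter) :=
  {x | ∀ m, 1 ≤ m → x ∈ Xk ℓ r (2 * m - 1)}

/-- `X₋ = ⋂_{m ≥ 1} X_{2m}`. -/
def Xminus (ℓ : ℕ → ℕ) (r : ℕ → ℚ) : Set (ℤ → Letter) :=
  {x | ∀ m, 1 ≤ m → x ∈ Xk ℓ r (2 * m)}



lemma mem_Forb_iff (ℓ : ℕ → ℕ) (r : ℕ → ℚ) (k : ℕ) (ω : Fin (2 * ℓ k - 1) → Letter) :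
    ω ∈ Forb ℓ r k ↔ (∃ i, ω i = bad k) ∨
      ((∀ i, ω i ≠ bad k) ∧ (r k : ℝ) ≤ f0 ω) ∨
      ((∀ i, ω i ≠ bad k) ∧ ∃ k' : Fin k, 1 ≤ k'.val ∧ k'.val % 2 = k % 2 ∧
        ∃ η ∈ Forb ℓ r k'.val, occursIn η ω) := by
  rw [Forb]
  simp only [Set.mem_union, Set.mem_setOf_eq]
  tauto

lemma occursIn_self {n : ℕ} (ω : Fin n → Letter) : occursIn ω ω := by
  refine ⟨0, by omega, fun i => ?_⟩
  congr 1
  exact Fin.ext (by simp)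

lemma occursAt_trans {p q n : ℕ} {η : Fin p → Letter} {θ : Fin q → Letter}
    {ω : Fin n → Letter} {s t : ℕ} (h1 : occursAt η θ t) (h2 : occursAt θ ω s) :
    occursAt η ω (s + t) := by
  obtain ⟨h1a, h1b⟩ := h1
  obtain ⟨h2a, h2b⟩ := h2
  refine ⟨by omega, fun i => ?_⟩
  rw [h1b i, h2b ⟨t + i.val, by omega⟩]
  congr 1
  exact Fin.ext (by simp; omega)

lemma card_le_of_avoid {n : ℕ} (S : Finset (Fin n → Letter)) (g : Letter)
    (hg : g ≠ Letter.zero) (h : ∀ ω ∈ S, ∀ i, ω i ≠ g) : S.card ≤ 2 ^ n := by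
  classical
  have := Finset.card_le_card_of_injOn (s := S)
    (f := fun (ω : Fin n → Letter) (i : Fin n) => decide (ω i = Letter.zero))
    (t := Finset.univ) (fun ω _ => Finset.mem_univ _) ?_
  · simpa using this
  · intro ω hω ω' hω' hee
    funext i
    have e1 := h ω hω i
    have e2 := h ω' hω' i
    have := congrFun hee i
    cases hx : ω i <;> cases hy : ω' i <;> cases g <;> simp_all

lemma ell_mono {ℓ : ℕ → ℕ} (hl : ∀ k, 1 ≤ k → ℓ k < ℓ (k + 1)) :
    ∀ a b, 1 ≤ a → a ≤ b → ℓ a ≤ ℓ b := by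
  intro a b ha hab
  induction b with
  | zero => omega
  | succ n ih =>
    rcases Nat.lt_or_ge a (n+1) with h | h
    · exact le_trans (ih (by omega)) (le_of_lt (hl n (by omega)))
    · have : a = n + 1 := by omega
      subst this; rfl

lemma ell_strict {ℓ : ℕ → ℕ} (hl : ∀ k, 1 ≤ k → ℓ k < ℓ (k + 1)) :
    ∀ a b, 1 ≤ a → a < b → ℓ a < ℓ b := fun a b ha hab =>
  lt_of_lt_of_le (hl a ha) (ell_mono hl (a+1) b (by omega) hab)

lemma ell_ge4 {ℓ : ℕ → ℕ} (hl1 : ℓ 1 = 4) (hl : ∀ k, 1 ≤ k → ℓ k < ℓ (k + 1)) :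
    ∀ a, 1 ≤ a → 4 ≤ ℓ a := fun a ha => hl1 ▸ ell_mono hl 1 a le_rfl ha

lemma mem_Padm_iff {ℓ : ℕ → ℕ} {r : ℕ → ℚ} {p n : ℕ} {ω : Fin (2 * n - 1) → Letter} :
    ω ∈ Padm ℓ r p n ↔
      ∀ k, 1 ≤ k → k % 2 = p → ∀ η ∈ Forb ℓ r k, ¬ occursIn η ω := by
  simp [Padm]

lemma bad_ne_zero (k : ℕ) : bad k ≠ Letter.zero := by
  unfold bad; split <;> simp

lemma bad_ne_bad {k k' : ℕ} (h : k % 2 ≠ k' % 2) : bad k ≠ bad k' := by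
  unfold bad
  rcases Nat.mod_two_eq_zero_or_one k with h1 | h1 <;>
    rcases Nat.mod_two_eq_zero_or_one k' with h2 | h2 <;> simp_all

/-- For `ω` admissible with its own parity, `ω` avoids `bad k` and has `f0 ω < r k`. -/
lemma Padm_self_bound {ℓ : ℕ → ℕ} {r : ℕ → ℚ} {k : ℕ} (hk : 1 ≤ k)
    {ω : Fin (2 * ℓ k - 1) → Letter} (hω : ω ∈ Padm ℓ r (k % 2) (ℓ k)) :
    (∀ i, ω i ≠ bad k) ∧ f0 ω < (r k : ℝ) := by
  have h := mem_Padm_iff.mp hω k hk rfl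
  have hnot : ω ∉ Forb ℓ r k := fun hmem => h ω hmem (occursIn_self ω)
  rw [mem_Forb_iff] at hnot
  push_neg at hnot
  exact ⟨hnot.1, hnot.2.1 hnot.1⟩

lemma count_multiples {L M : ℕ} (hM : 0 < M) (hL : 0 < L) :
    L ≤ (Finset.univ.filter fun i : Fin L => M ∣ i.val).card * M := by
  classical
  set q := (L - 1) / M + 1 with hqdef
  have hq : L ≤ q * M := by
    calc L = (L - 1) + 1 := by omega
    _ ≤ (M * ((L-1)/M) + (L-1) % M) + 1 := by rw [Nat.div_add_mod]
    _ ≤ M * ((L-1)/M) + M := by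
        rw [add_assoc]
        exact Nat.add_le_add_left (Nat.mod_lt _ hM) _
    _ = q * M := by rw [hqdef]; ring
  have hjlt : ∀ j : Fin q, j.val * M < L := by
    intro j
    have hj : j.val ≤ (L - 1) / M := by have := j.isLt; omega
    have := Nat.div_mul_le_self (L - 1) M
    have h2 : j.val * M ≤ (L - 1) / M * M := Nat.mul_le_mul_right M hj
    omega
  have hcard : q ≤ (Finset.univ.filter fun i : Fin L => M ∣ i.val).card := by
    have := Finset.card_le_card_of_injOn
      (s := (Finset.univ : Finset (Fin q)))
      (t := Finset.univ.filter fun i : Fin L => M ∣ i.val)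
      (f := fun j : Fin q => (⟨j.val * M, hjlt j⟩ : Fin L)) ?_ ?_
    · simpa using this
    · intro j _
      simp only [Finset.mem_filter, Finset.mem_univ, true_and]
      simp
    · intro j _ j' _ he
      have : j.val * M = j'.val * M := congrArg Fin.val he
      exact Fin.ext (Nat.eq_of_mul_eq_mul_right hM this)
  calc L ≤ q * M := hq
  _ ≤ _ := Nat.mul_le_mul_right M hcard

lemma omega0_mem {ℓ : ℕ → ℕ} {r : ℕ → ℚ}
    (hl1 : ℓ 1 = 4) (hlmono : ∀ k, 1 ≤ k → ℓ k < ℓ (k + 1))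
    (hS1 : ∀ k, 1 ≤ k → 1 < ((2 * ℓ k - 1 : ℕ) : ℝ) * (r k : ℝ))
    {k : ℕ} (hk : 2 ≤ k) :
    (fun i : Fin (2 * ℓ k - 1) =>
        if (2 * ℓ (k - 1) - 1) ∣ i.val then Letter.zero else bad k)
      ∈ Padm ℓ r (1 - k % 2) (ℓ k) := by
  set M := 2 * ℓ (k - 1) - 1 with hMdef
  rw [mem_Padm_iff]
  intro k'
  induction k' using Nat.strong_induction_on with
  | _ k' IH =>
  intro hk1 hpar η hη hoccIn
  obtain ⟨s, hs, hocc⟩ := hoccIn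
  simp only at hocc
  have h4k : 4 ≤ ℓ k := ell_ge4 hl1 hlmono k (by omega)
  have h4k' : 4 ≤ ℓ k' := ell_ge4 hl1 hlmono k' hk1
  have h4km : 4 ≤ ℓ (k - 1) := ell_ge4 hl1 hlmono (k - 1) (by omega)
  have hparne : k' % 2 ≠ k % 2 := by
    intro heq
    rw [heq] at hpar
    rcases Nat.mod_two_eq_zero_or_one k with h | h <;> rw [h] at hpar <;> omega
  have hk'lt : k' < k := by
    by_contra hcon
    have hkk' : k < k' := by
      rcases Nat.lt_or_ge k' k with h | h
      · omega
      · rcases Nat.eq_or_lt_of_le h with h' | h'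
        · exact absurd (h' ▸ rfl) hparne
        · exact h'
    have := ell_strict hlmono k k' (by omega) hkk'
    omega
  have hlk'le : ℓ k' ≤ ℓ (k - 1) := ell_mono hlmono k' (k - 1) hk1 (by omega)
  have hMk' : 2 * ℓ k' - 1 ≤ M := by omega
  rcases (mem_Forb_iff ℓ r k' η).mp hη with ⟨i, hi⟩ | ⟨hne, hf⟩ |
      ⟨hne, k'', h1, h2, η', hη', t, hocc'⟩
  · -- bad letter occurs: impossible
    rw [hocc i] at hi
    split_ifs at hi
    · exact bad_ne_zero k' hi.symm
    · exact bad_ne_bad (fun h => hparne h.symm) hi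
  · -- frequency too big: impossible, at most one zero in the window
    have hcard : (Finset.univ.filter fun i => η i = Letter.zero).card ≤ 1 := by
      rw [Finset.card_le_one]
      intro a ha b hb
      simp only [Finset.mem_filter, Finset.mem_univ, true_and] at ha hb
      have ea : (if M ∣ s + a.val then Letter.zero else bad k) = Letter.zero := by
        rw [← hocc a]; exact ha
      have eb : (if M ∣ s + b.val then Letter.zero else bad k) = Letter.zero := by
        rw [← hocc b]; exact hb
      have da : M ∣ s + a.val := by
        by_contra hd; rw [if_neg hd] at ea; exact bad_ne_zero k ea
      have db : M ∣ s + b.val := by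
        by_contra hd; rw [if_neg hd] at eb; exact bad_ne_zero k eb
      have key : ∀ x y : Fin (2 * ℓ k' - 1), M ∣ s + x.val → M ∣ s + y.val →
          x.val ≤ y.val → x.val = y.val := by
        intro x y dx dy hxy
        have hdvd : M ∣ (s + y.val) - (s + x.val) := Nat.dvd_sub dy dx
        have heq : (s + y.val) - (s + x.val) = y.val - x.val := by omega
        rw [heq] at hdvd
        by_contra hne2
        have hpos : 0 < y.val - x.val := by omega
        have := Nat.le_of_dvd hpos hdvd
        have := y.isLt
        omega
      rcases Nat.le_total a.val b.val with hab | hab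
      · exact Fin.ext (key a b da db hab)
      · exact Fin.ext (key b a db da hab).symm
    have hN' : (0 : ℝ) < ((2 * ℓ k' - 1 : ℕ) : ℝ) := by
      exact_mod_cast Nat.pos_of_ne_zero (by omega)
    have hS := hS1 k' hk1
    have hfle : f0 η ≤ 1 / ((2 * ℓ k' - 1 : ℕ) : ℝ) := by
      rw [f0]
      gcongr
      exact_mod_cast hcard
    have : (r k' : ℝ) ≤ 1 / ((2 * ℓ k' - 1 : ℕ) : ℝ) := le_trans hf hfle
    rw [le_div_iff₀ hN'] at this
    nlinarith [hS, this]
  · -- a lower-level forbidden word occurs: impossible by induction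
    exact IH k''.val k''.isLt h1 (by omega) η' hη'
      ⟨s + t, occursAt_trans hocc' ⟨hs, hocc⟩⟩

set_option maxHeartbeats 1000000 in
lemma master (ℓ : ℕ → ℕ) (r : ℕ → ℚ)
    (hl1 : ℓ 1 = 4) (hlmono : ∀ k, 1 ≤ k → ℓ k < ℓ (k + 1))
    (hrpos : ∀ k, 1 ≤ k → 0 < r k)
    (hS1 : ∀ k, 1 ≤ k → 1 < ((2 * ℓ k - 1 : ℕ) : ℝ) * (r k : ℝ))
    (hS3 : ∀ k, 1 ≤ k →
      10 * ((r (k + 1) : ℝ) + 2 * (((2 * ℓ (k + 1) - 1 : ℕ) : ℝ))⁻¹ ^ 2 *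
        Real.log ((2 * ℓ (k + 1) - 1 : ℕ) : ℝ)) ≤ ((4 * ℓ k - 2 : ℕ) : ℝ)⁻¹)
    (hS4 : ∀ k, 1 ≤ k → 2 ^ (4 * ℓ k) ≤ ℓ (k + 1))
    (k : ℕ) (hk : 2 ≤ k) (c : ℝ) (hc1 : 1 ≤ c)
    (hc2 : c ≤ ((2 * ℓ k - 1 : ℕ) : ℝ) ^ 2) :
    (c * ∑ ω ∈ Padm ℓ r (k % 2) (ℓ k), Real.exp (f0 ω * ((2 * ℓ k - 1 : ℕ) : ℝ) ^ 2)) ^ 10 ≤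
      c * ∑ ω ∈ Padm ℓ r (1 - k % 2) (ℓ k), Real.exp (f0 ω * ((2 * ℓ k - 1 : ℕ) : ℝ) ^ 2) := by
  classical
  have h4k : 4 ≤ ℓ k := ell_ge4 hl1 hlmono k (by omega)
  have h4m : 4 ≤ ℓ (k - 1) := ell_ge4 hl1 hlmono (k - 1) (by omega)
  set L : ℕ := 2 * ℓ k - 1 with hLdef
  set M : ℕ := 2 * ℓ (k - 1) - 1 with hMdef
  have hLpos : 0 < L := by omega
  have hMpos : 0 < M := by omega
  set LR : ℝ := ((L : ℕ) : ℝ) with hLRdef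
  set MR : ℝ := ((M : ℕ) : ℝ) with hMRdef
  have hLR : (0 : ℝ) < LR := by rw [hLRdef]; exact_mod_cast hLpos
  have hMR : (0 : ℝ) < MR := by rw [hMRdef]; exact_mod_cast hMpos
  have hLR1 : (1 : ℝ) ≤ LR := by rw [hLRdef]; exact_mod_cast hLpos
  set Sp : ℝ := ∑ ω ∈ Padm ℓ r (k % 2) (ℓ k), Real.exp (f0 ω * LR ^ 2) with hSpdef
  set Sq : ℝ := ∑ ω ∈ Padm ℓ r (1 - k % 2) (ℓ k), Real.exp (f0 ω * LR ^ 2) with hSqdef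
  have hSpnn : 0 ≤ Sp := Finset.sum_nonneg fun ω _ => (Real.exp_pos _).le
  have hSqnn : 0 ≤ Sq := Finset.sum_nonneg fun ω _ => (Real.exp_pos _).le
  -- upper bound Sp ≤ 2^L * exp (r k * LR^2)
  have hub : ∀ ω ∈ Padm ℓ r (k % 2) (ℓ k),
      Real.exp (f0 ω * LR ^ 2) ≤ Real.exp ((r k : ℝ) * LR ^ 2) := by
    intro ω hω
    have := (Padm_self_bound (by omega : 1 ≤ k) hω).2
    exact Real.exp_le_exp.mpr (mul_le_mul_of_nonneg_right this.le (by positivity))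
  have hcardp : ((Padm ℓ r (k % 2) (ℓ k)).card : ℝ) ≤ (2 : ℝ) ^ L := by
    have := card_le_of_avoid (Padm ℓ r (k % 2) (ℓ k)) (bad k) (bad_ne_zero k)
      (fun ω hω => (Padm_self_bound (by omega : 1 ≤ k) hω).1)
    exact_mod_cast this
  have hSp : Sp ≤ (2 : ℝ) ^ L * Real.exp ((r k : ℝ) * LR ^ 2) := by
    calc Sp ≤ (Padm ℓ r (k % 2) (ℓ k)).card • Real.exp ((r k : ℝ) * LR ^ 2) :=
          Finset.sum_le_card_nsmul _ _ _ hub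
    _ = ((Padm ℓ r (k % 2) (ℓ k)).card : ℝ) * Real.exp ((r k : ℝ) * LR ^ 2) := by
          rw [nsmul_eq_mul]
    _ ≤ (2 : ℝ) ^ L * Real.exp ((r k : ℝ) * LR ^ 2) :=
          mul_le_mul_of_nonneg_right hcardp (Real.exp_pos _).le
  -- lower bound: exp (c₀ * LR) ≤ Sq
  set ω₀ : Fin L → Letter := fun i => if M ∣ i.val then Letter.zero else bad k with hω₀def
  have hω₀mem : ω₀ ∈ Padm ℓ r (1 - k % 2) (ℓ k) := omega0_mem hl1 hlmono hS1 hk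
  set c₀ : ℕ := (Finset.univ.filter fun i : Fin L => ω₀ i = Letter.zero).card with hc₀def
  have hset : (Finset.univ.filter fun i : Fin L => ω₀ i = Letter.zero) =
      Finset.univ.filter fun i : Fin L => M ∣ i.val := by
    ext i
    simp only [Finset.mem_filter, Finset.mem_univ, true_and, hω₀def]
    split_ifs with h
    · simp [h]
    · simp [h, bad_ne_zero k]
  have hcount : L ≤ c₀ * M := by
    rw [hc₀def, hset]; exact count_multiples hMpos hLpos
  have hcountR : LR ≤ (c₀ : ℝ) * MR := by rw [hLRdef, hMRdef]; exact_mod_cast hcount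
  have hf0 : f0 ω₀ * LR ^ 2 = (c₀ : ℝ) * LR := by
    rw [f0, ← hc₀def]
    field_simp
    ring
  have hSq : Real.exp ((c₀ : ℝ) * LR) ≤ Sq := by
    rw [← hf0]
    exact Finset.single_le_sum (fun ω _ => (Real.exp_pos (f0 ω * LR ^ 2)).le) hω₀mem
  -- arithmetic facts
  have hk1eq : k - 1 + 1 = k := by omega
  have hS3' := hS3 (k - 1) (by omega)
  rw [hk1eq] at hS3'
  have h2M : (4 * ℓ (k - 1) - 2 : ℕ) = 2 * M := by omega
  rw [h2M] at hS3'
  have h2Mcast : ((2 * M : ℕ) : ℝ) = 2 * MR := by push_cast; ring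
  rw [h2Mcast] at hS3'
  have hS4' := hS4 (k - 1) (by omega)
  rw [hk1eq] at hS4'
  have h20M : 20 * M ≤ L := by
    set m : ℕ := ℓ (k - 1)
    have hm : m < 2 ^ m := Nat.lt_two_pow_self
    have key : 40 * m ≤ 2 ^ (4 * m) :=
      calc 40 * m ≤ 64 * m := by omega
      _ ≤ 64 * 2 ^ m := Nat.mul_le_mul_left 64 hm.le
      _ = 2 ^ (m + 6) := by rw [pow_add]; ring
      _ ≤ 2 ^ (4 * m) := Nat.pow_le_pow_right (by norm_num) (by omega)
    omega
  have h20MR : 20 * MR ≤ LR := by rw [hLRdef, hMRdef]; exact_mod_cast h20M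
  have hlog2 : Real.log 2 ≤ 1 := by
    have := Real.log_two_lt_d9; linarith
  have hlogL : 0 ≤ Real.log LR := Real.log_nonneg hLR1
  -- main real inequality
  have hmain : 20 * Real.log LR + (10 * LR) * Real.log 2 + 10 * ((r k : ℝ) * LR ^ 2) ≤
      (c₀ : ℝ) * LR := by
    have hge : LR ^ 2 / MR ≤ (c₀ : ℝ) * LR := by
      rw [div_le_iff₀ hMR]
      nlinarith [hLR, hcountR]
    have h1 : 10 * (r k : ℝ) * LR ^ 2 + 20 * Real.log LR ≤ LR ^ 2 / (2 * MR) := by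
      have h := mul_le_mul_of_nonneg_right hS3' (le_of_lt (by positivity : (0:ℝ) < LR ^ 2))
      calc 10 * (r k : ℝ) * LR ^ 2 + 20 * Real.log LR
          = 10 * ((r k : ℝ) + 2 * LR⁻¹ ^ 2 * Real.log LR) * LR ^ 2 := by
            field_simp
            ring
      _ ≤ (2 * MR)⁻¹ * LR ^ 2 := h
      _ = LR ^ 2 / (2 * MR) := inv_mul_eq_div _ _
    have h2 : (10 * LR) * Real.log 2 ≤ LR ^ 2 / (2 * MR) := by
      calc (10 * LR) * Real.log 2 ≤ (10 * LR) * 1 :=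
            mul_le_mul_of_nonneg_left hlog2 (by positivity)
      _ = 10 * LR := by ring
      _ ≤ LR ^ 2 / (2 * MR) := by
            rw [le_div_iff₀ (by positivity)]
            nlinarith [mul_le_mul_of_nonneg_right h20MR hLR.le]
    have h3 : LR ^ 2 / (2 * MR) + LR ^ 2 / (2 * MR) = LR ^ 2 / MR := by
      field_simp
      ring
    linarith
  -- exponential bookkeeping
  have e1 : Real.exp (20 * Real.log LR) = (LR ^ 2) ^ 10 := by
    rw [show (20 : ℝ) * Real.log LR = ((20 : ℕ) : ℝ) * Real.log LR by norm_num,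
      Real.exp_nat_mul, Real.exp_log hLR, ← pow_mul]
  have e2 : Real.exp ((10 * LR) * Real.log 2) = ((2 : ℝ) ^ L) ^ 10 := by
    rw [show (10 : ℝ) * LR * Real.log 2 = ((L * 10 : ℕ) : ℝ) * Real.log 2 by push_cast; ring,
      Real.exp_nat_mul, Real.exp_log (by norm_num : (0:ℝ) < 2), ← pow_mul]
  have e3 : Real.exp (10 * ((r k : ℝ) * LR ^ 2)) = Real.exp ((r k : ℝ) * LR ^ 2) ^ 10 := by
    rw [show (10 : ℝ) * ((r k : ℝ) * LR ^ 2) = ((10 : ℕ) : ℝ) * ((r k : ℝ) * LR ^ 2) by norm_num,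
      Real.exp_nat_mul]
  calc (c * Sp) ^ 10 ≤ (LR ^ 2 * ((2 : ℝ) ^ L * Real.exp ((r k : ℝ) * LR ^ 2))) ^ 10 := by
        apply pow_le_pow_left₀ (by positivity)
        exact mul_le_mul hc2 hSp hSpnn (by positivity)
  _ = Real.exp (20 * Real.log LR + (10 * LR) * Real.log 2 + 10 * ((r k : ℝ) * LR ^ 2)) := by
        rw [Real.exp_add, Real.exp_add, e1, e2, e3, mul_pow]
        ring
  _ ≤ Real.exp ((c₀ : ℝ) * LR) := Real.exp_le_exp.mpr hmain
  _ ≤ Sq := hSq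
  _ ≤ c * Sq := le_mul_of_one_le_left hSqnn hc1

theorem weighted_pattern_inequality (ℓ : ℕ → ℕ) (r : ℕ → ℚ)
    (hl1 : ℓ 1 = 4) (hlmono : ∀ k, 1 ≤ k → ℓ k < ℓ (k + 1))
    (hr1 : r 1 = 1 / 2) (hrpos : ∀ k, 1 ≤ k → 0 < r k) (hrhalf : ∀ k, 1 ≤ k → r k ≤ 1 / 2)
    (hdvd : ∀ k, 2 ≤ k → (2 * ℓ (k - 1) - 1) ∣ (2 * ℓ k - 1))
    (hS1 : ∀ k, 1 ≤ k → 1 < ((2 * ℓ k - 1 : ℕ) : ℝ) * (r k : ℝ))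
    (hS2 : ∀ k, 1 ≤ k → 10 * H ((r (k + 1) : ℝ)) ≤ 1 / 2 * (r k : ℝ) * Real.log 2)
    (hS3 : ∀ k, 1 ≤ k →
      10 * ((r (k + 1) : ℝ) + 2 * (((2 * ℓ (k + 1) - 1 : ℕ) : ℝ))⁻¹ ^ 2 *
        Real.log ((2 * ℓ (k + 1) - 1 : ℕ) : ℝ)) ≤ ((4 * ℓ k - 2 : ℕ) : ℝ)⁻¹)
    (hS4 : ∀ k, 1 ≤ k → 2 ^ (4 * ℓ k) ≤ ℓ (k + 1)) :
    (∀ k, 2 ≤ k → k % 2 = 0 → ∀ c : ℝ, 1 ≤ c → c ≤ ((2 * ℓ k - 1 : ℕ) : ℝ) ^ 2 →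
      (c * ∑ ω ∈ Padm ℓ r 0 (ℓ k), Real.exp (f0 ω * ((2 * ℓ k - 1 : ℕ) : ℝ) ^ 2)) ^ 10 ≤
        c * ∑ ω ∈ Padm ℓ r 1 (ℓ k), Real.exp (f0 ω * ((2 * ℓ k - 1 : ℕ) : ℝ) ^ 2)) ∧
    (∀ k, 3 ≤ k → k % 2 = 1 → ∀ c : ℝ, 1 ≤ c → c ≤ ((2 * ℓ k - 1 : ℕ) : ℝ) ^ 2 →
      (c * ∑ ω ∈ Padm ℓ r 1 (ℓ k), Real.exp (f0 ω * ((2 * ℓ k - 1 : ℕ) : ℝ) ^ 2)) ^ 10 ≤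
        c * ∑ ω ∈ Padm ℓ r 0 (ℓ k), Real.exp (f0 ω * ((2 * ℓ k - 1 : ℕ) : ℝ) ^ 2)) := by
  constructor
  · intro k hk hpar c hc1 hc2
    have h := master ℓ r hl1 hlmono hrpos hS1 hS3 hS4 k hk c hc1 hc2
    rw [hpar] at h
    simpa using h
  · intro k hk hpar c hc1 hc2
    have h := master ℓ r hl1 hlmono hrpos hS1 hS3 hS4 k (by omega) c hc1 hc2
    rw [hpar] at h
    simpa using h
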